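/- Fix i ∈ {0,…,k}. A vector (u, v, z̃_0, …, z̃_s) ∈ ℤ^{s+3} has all coordinates nonnegative and satisfies u + v = Σ_{t=0}^{s} N_t z̃_t, Σ_{t=0}^{s} n^i_t z̃_t ≤ u and Σ_{t=0}^{s} m^i_t z̃_t ≤ v, if and only if it is an ℕ-linear combination of the s+2 vectors w(0, n^i_0), w(1, n^i_1), …, w(s, n^i_s) and w(γ(i), n^i_{γ(i)} + 1). (This identifies the lattice points of the cone on the simplex Δ̃_i of the triangulation.) -/

import Mathlib

/-- `N_t = #γ⁻¹(t)`, the size of the `t`-th piece of the partition encoded by `γ`. -/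
def Nt (k s : ℕ) (γ : Fin (k + 1) → Fin (s + 1)) (t : Fin (s + 1)) : ℕ :=
  (Finset.univ.filter fun j => γ j = t).card

/-- `n^i_t = #(γ⁻¹(t) ∩ {0,…,i−1})`. -/
def nit (k s : ℕ) (γ : Fin (k + 1) → Fin (s + 1)) (i : Fin (k + 1)) (t : Fin (s + 1)) : ℕ :=
  (Finset.univ.filter fun j => γ j = t ∧ j < i).card

/-- `m^i_t = #(γ⁻¹(t) ∩ {i+1,…,k})`. -/
def mit (k s : ℕ) (γ : Fin (k + 1) → Fin (s + 1)) (i : Fin (k + 1)) (t : Fin (s + 1)) : ℕ :=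
  (Finset.univ.filter fun j => γ j = t ∧ i < j).card

/-- The vector `w(t,δ) ∈ ℤ^{s+3}` with `u = δ`, `v = N_t − δ`, `z̃_t = 1`, rest `0`. -/
def wvec (k s : ℕ) (γ : Fin (k + 1) → Fin (s + 1)) (t : Fin (s + 1)) (δ : ℕ) :
    ℤ × ℤ × (Fin (s + 1) → ℤ) :=
  ((δ : ℤ), (Nt k s γ t : ℤ) - (δ : ℤ), fun r => if r = t then 1 else 0)

/-- The `s+2` vectors `w(t, n^i_t)` for `t ∈ {0,…,s}` (indexed by `some t`) together with
`w(γ(i), n^i_{γ(i)} + 1)` (indexed by `none`). -/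
def vvec (k s : ℕ) (γ : Fin (k + 1) → Fin (s + 1)) (i : Fin (k + 1)) :
    Option (Fin (s + 1)) → ℤ × ℤ × (Fin (s + 1) → ℤ)
  | some t => wvec k s γ t (nit k s γ i t)
  | none => wvec k s γ (γ i) (nit k s γ i (γ i) + 1)

/-- A vector `(u, v, z̃)` is nonnegative with `u + v = Σ_t N_t z̃_t`,
`Σ_t n^i_t z̃_t ≤ u` and `Σ_t m^i_t z̃_t ≤ v`, iff it is an ℕ-linear combination of the
`s+2` vectors `w(0, n^i_0), …, w(s, n^i_s), w(γ(i), n^i_{γ(i)}+1)`. -/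
lemma Nsplit (k s : ℕ) (γ : Fin (k + 1) → Fin (s + 1)) (i : Fin (k + 1)) (t : Fin (s + 1)) :
    Nt k s γ t = nit k s γ i t + mit k s γ i t + (if γ i = t then 1 else 0) := by
  classical
  unfold Nt nit mit
  have h3 : (if γ i = t then 1 else 0) = ∑ j : Fin (k+1), if j = i then (if γ j = t then 1 else 0) else 0 := by
    rw [Finset.sum_ite_eq' Finset.univ i (fun j => if γ j = t then 1 else 0)]
    simp
  rw [Finset.card_filter, Finset.card_filter, Finset.card_filter, h3,
    ← Finset.sum_add_distrib, ← Finset.sum_add_distrib]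
  apply Finset.sum_congr rfl
  intro j _
  rcases lt_trichotomy j i with h|h|h <;> split_ifs <;> simp_all <;> omega

lemma nit_lt_Nt (k s : ℕ) (γ : Fin (k + 1) → Fin (s + 1)) (i : Fin (k + 1)) :
    nit k s γ i (γ i) < Nt k s γ (γ i) := by
  apply Finset.card_lt_card
  constructor
  · intro j hj; simp only [Finset.mem_filter] at *; exact ⟨hj.1, hj.2.1⟩
  · intro h
    have := h (by simp : i ∈ Finset.univ.filter fun j => γ j = γ i)
    simp at this


lemma sum_vvec (k s : ℕ) (γ : Fin (k + 1) → Fin (s + 1)) (i : Fin (k + 1))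
    (c : Option (Fin (s + 1)) → ℕ) :
    ∑ o, c o • vvec k s γ i o =
      ((c none : ℤ) * ((nit k s γ i (γ i) : ℤ) + 1) + ∑ t, (c (some t) : ℤ) * (nit k s γ i t : ℤ),
       (c none : ℤ) * ((Nt k s γ (γ i) : ℤ) - (nit k s γ i (γ i) : ℤ) - 1)
         + ∑ t, (c (some t) : ℤ) * ((Nt k s γ t : ℤ) - (nit k s γ i t : ℤ)),
       fun r => (c none : ℤ) * (if r = γ i then 1 else 0) + (c (some r) : ℤ)) := by
  rw [Fintype.sum_option]
  refine Prod.ext ?_ (Prod.ext ?_ ?_)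
  · simp [Prod.fst_sum, vvec, wvec, nsmul_eq_mul, mul_add, mul_comm]
  · simp [Prod.snd_sum, Prod.fst_sum, vvec, wvec, nsmul_eq_mul]
    exact Or.inl (by ring)
  · funext r
    simp [Prod.snd_sum, Finset.sum_apply, vvec, wvec, nsmul_eq_mul, mul_ite, Finset.sum_ite_eq']

lemma sum_mul_aux (s : ℕ) (g : Fin (s + 1)) (A : ℤ) (C f : Fin (s + 1) → ℤ) :
    ∑ t, f t * ((if t = g then A else 0) + C t) = A * f g + ∑ t, C t * f t := by
  have h : ∀ t ∈ Finset.univ, f t * ((if t = g then A else 0) + C t)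
      = (if t = g then A * f g else 0) + C t * f t := by
    intro t _
    split_ifs with h
    · subst h; ring
    · ring
  rw [Finset.sum_congr rfl h, Finset.sum_add_distrib, Finset.sum_ite_eq']
  simp

theorem stmt10 (k s : ℕ) (hk : 1 ≤ k) (γ : Fin (k + 1) → Fin (s + 1))
    (hγ : Function.Surjective γ) (i : Fin (k + 1)) (x : ℤ × ℤ × (Fin (s + 1) → ℤ)) :
    (0 ≤ x.1 ∧ 0 ≤ x.2.1 ∧ (∀ t, 0 ≤ x.2.2 t) ∧
        x.1 + x.2.1 = ∑ t, (Nt k s γ t : ℤ) * x.2.2 t ∧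
        (∑ t, (nit k s γ i t : ℤ) * x.2.2 t) ≤ x.1 ∧
        (∑ t, (mit k s γ i t : ℤ) * x.2.2 t) ≤ x.2.1) ↔
      ∃ c : Option (Fin (s + 1)) → ℕ, x = ∑ o, c o • vvec k s γ i o := by
  obtain ⟨u, v, z⟩ := x
  simp only
  have hNsplit : ∀ t, (Nt k s γ t : ℤ) = (nit k s γ i t : ℤ) + (mit k s γ i t : ℤ)
      + (if t = γ i then 1 else 0) := by
    intro t
    rw [Nsplit k s γ i t]
    push_cast
    rcases eq_or_ne t (γ i) with h | h
    · simp [h]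
    · simp [h, Ne.symm h]
  constructor
  · rintro ⟨hu, hv, hz, heq, hn, hm⟩
    set a : ℤ := u - ∑ t, (nit k s γ i t : ℤ) * z t with ha
    set b : ℤ := v - ∑ t, (mit k s γ i t : ℤ) * z t with hb
    have ha0 : 0 ≤ a := by simp [ha]; linarith
    have hb0 : 0 ≤ b := by simp [hb]; linarith
    have hNz : ∑ t, (Nt k s γ t : ℤ) * z t
        = (∑ t, (nit k s γ i t : ℤ) * z t) + (∑ t, (mit k s γ i t : ℤ) * z t) + z (γ i) := by
      have h : ∀ t ∈ Finset.univ, (Nt k s γ t : ℤ) * z t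
          = (nit k s γ i t : ℤ) * z t + (mit k s γ i t : ℤ) * z t
            + (if t = γ i then z (γ i) else 0) := by
        intro t _
        rw [hNsplit t]
        split_ifs with h
        · subst h; ring
        · ring
      rw [Finset.sum_congr rfl h, Finset.sum_add_distrib, Finset.sum_add_distrib,
        Finset.sum_ite_eq']
      simp
    have hab : a + b = z (γ i) := by
      rw [ha, hb]; linarith [heq, hNz]
    refine ⟨fun o => Option.elim o a.toNat (fun t => if t = γ i then b.toNat else (z t).toNat), ?_⟩
    rw [sum_vvec]
    simp only [Option.elim]
    have hcn : (a.toNat : ℤ) = a := Int.toNat_of_nonneg ha0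
    have hcs : ∀ t : Fin (s + 1),
        ((if t = γ i then b.toNat else (z t).toNat : ℕ) : ℤ) = if t = γ i then b else z t := by
      intro t
      split_ifs
      · exact Int.toNat_of_nonneg hb0
      · exact Int.toNat_of_nonneg (hz t)
    have split_sum : ∀ f : Fin (s + 1) → ℤ,
        ∑ t, ((if t = γ i then b.toNat else (z t).toNat : ℕ) : ℤ) * f t
          = (∑ t, f t * z t) + (b - z (γ i)) * f (γ i) := by
      intro f
      have h : ∀ t ∈ Finset.univ, ((if t = γ i then b.toNat else (z t).toNat : ℕ) : ℤ) * f t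
          = f t * z t + (if t = γ i then (b - z (γ i)) * f (γ i) else 0) := by
        intro t _
        rw [hcs t]
        split_ifs with h
        · subst h; ring
        · ring
      rw [Finset.sum_congr rfl h, Finset.sum_add_distrib, Finset.sum_ite_eq']
      simp
    refine Prod.ext ?_ (Prod.ext ?_ ?_)
    · simp only [split_sum, hcn]
      linear_combination -ha - (nit k s γ i (γ i) : ℤ) * hab
    · simp only [split_sum, hcn]
      have hsub : ∑ t, ((Nt k s γ t : ℤ) - (nit k s γ i t : ℤ)) * z t
          = (∑ t, (Nt k s γ t : ℤ) * z t) - ∑ t, (nit k s γ i t : ℤ) * z t := by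
        simp [sub_mul, Finset.sum_sub_distrib]
      linear_combination heq + ha - ((Nt k s γ (γ i) : ℤ) - (nit k s γ i (γ i) : ℤ)) * hab
        - hsub
    · funext r
      simp only [hcn, hcs r]
      split_ifs with h
      · subst h; linarith
      · ring
  · rintro ⟨c, h⟩
    rw [sum_vvec] at h
    obtain ⟨h1, h2, h3⟩ : u = _ ∧ v = _ ∧ z = _ := by
      simpa [Prod.ext_iff] using h
    subst h1 h2 h3
    simp only
    set A : ℤ := (c none : ℤ) with hA
    have hA0 : 0 ≤ A := Int.natCast_nonneg _
    have hC0 : ∀ t, (0 : ℤ) ≤ (c (some t) : ℤ) := fun t => Int.natCast_nonneg _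
    have hnN : ∀ t, (nit k s γ i t : ℤ) ≤ (Nt k s γ t : ℤ) := by
      intro t
      rw [hNsplit t]
      have := Int.natCast_nonneg (mit k s γ i t)
      split_ifs <;> linarith
    have hmg : (Nt k s γ (γ i) : ℤ) - (nit k s γ i (γ i) : ℤ) - 1 = (mit k s γ i (γ i) : ℤ) := by
      rw [hNsplit (γ i)]; simp; ring
    have hNz := sum_mul_aux s (γ i) A (fun t => (c (some t) : ℤ)) (fun t => (Nt k s γ t : ℤ))
    have hnz := sum_mul_aux s (γ i) A (fun t => (c (some t) : ℤ)) (fun t => (nit k s γ i t : ℤ))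
    have hmz := sum_mul_aux s (γ i) A (fun t => (c (some t) : ℤ)) (fun t => (mit k s γ i t : ℤ))
    have hsub : ∑ t, (c (some t) : ℤ) * ((Nt k s γ t : ℤ) - (nit k s γ i t : ℤ))
        = (∑ t, (c (some t) : ℤ) * (Nt k s γ t : ℤ))
          - ∑ t, (c (some t) : ℤ) * (nit k s γ i t : ℤ) := by
      simp [mul_sub, Finset.sum_sub_distrib]
    have hmle : ∑ t, (c (some t) : ℤ) * (mit k s γ i t : ℤ)
        ≤ ∑ t, (c (some t) : ℤ) * ((Nt k s γ t : ℤ) - (nit k s γ i t : ℤ)) := by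
      apply Finset.sum_le_sum
      intro t _
      apply mul_le_mul_of_nonneg_left _ (hC0 t)
      rw [hNsplit t]
      split_ifs <;> linarith
    have hsum_n_nonneg : (0 : ℤ) ≤ ∑ t, (c (some t) : ℤ) * (nit k s γ i t : ℤ) :=
      Finset.sum_nonneg fun t _ => mul_nonneg (hC0 t) (Int.natCast_nonneg _)
    have hsum_Nn_nonneg : (0 : ℤ) ≤ ∑ t, (c (some t) : ℤ) * ((Nt k s γ t : ℤ) - (nit k s γ i t : ℤ)) :=
      Finset.sum_nonneg fun t _ => mul_nonneg (hC0 t) (by linarith [hnN t])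
    have hng1 : (nit k s γ i (γ i) : ℤ) + 1 ≤ (Nt k s γ (γ i) : ℤ) := by
      exact_mod_cast nit_lt_Nt k s γ i
    refine ⟨?_, ?_, ?_, ?_, ?_, ?_⟩
    · have := mul_nonneg hA0 (by positivity : (0:ℤ) ≤ (nit k s γ i (γ i) : ℤ) + 1)
      linarith
    · have := mul_nonneg hA0 (by linarith : (0:ℤ) ≤ (Nt k s γ (γ i) : ℤ) - (nit k s γ i (γ i) : ℤ) - 1)
      linarith
    · intro t
      split_ifs with h <;> [skip; skip] <;> positivity
    · linear_combination hsub - hNz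
    · have h5 : A * ((nit k s γ i (γ i) : ℤ) + 1) = A * (nit k s γ i (γ i) : ℤ) + A := by ring
      linarith [hnz]
    · have h6 : A * ((Nt k s γ (γ i) : ℤ) - (nit k s γ i (γ i) : ℤ) - 1)
          = A * (mit k s γ i (γ i) : ℤ) := by rw [hmg]
      linarith [hmz, hmle]
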